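/- Over an algebraically closed field k of characteristic p, for h₁,h₂,h₃,h₄ ∈ k with h₄ ≠ 0, the number of solutions (c₁,c₂) ∈ k² to the system c₁^p + c₂h₁ − c₁h₂ = 0, c₂^p + c₂h₃ − c₁h₄ = 0 is: p² if h₁h₄ − h₂h₃ ≠ 0; p if h₁h₄ − h₂h₃ = 0 but h₃^p − h₂h₄^{p-1} ≠ 0; and 1 if h₁h₄ − h₂h₃ = h₃^p − h₂h₄^{p-1} = 0. -/

import Mathlib

open Polynomial in
theorem additive_count_roots_aux {k : Type*} [Field k] [IsAlgClosed k] (P : Polynomial k)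
    (hP : P ≠ 0) (b : k) (hb : b ≠ 0) (hd : P.derivative = C b) :
    {x : k | Polynomial.eval x P = 0}.ncard = P.natDegree := by
  have hsep : P.Separable := ⟨0, C b⁻¹, by rw [hd, zero_mul, zero_add, ← C_mul,
    inv_mul_cancel₀ hb, C_1]⟩
  have hset : {x : k | Polynomial.eval x P = 0} = P.rootSet k := by
    ext x; simp [Polynomial.mem_rootSet, hP]
  rw [hset]
  rw [show (P.rootSet k).ncard = Fintype.card (P.rootSet k) by
    rw [Set.ncard_eq_toFinset_card', Set.toFinset_card]]
  exact Polynomial.card_rootSet_eq_natDegree hsep (IsAlgClosed.splits _)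

open Polynomial in
theorem additive_case1_aux {k : Type*} [Field k] [IsAlgClosed k] {p : ℕ} (hp : p.Prime)
    [CharP k p] (A B : k) (hB : B ≠ 0) :
    {x : k | x ^ (p^2) + A * x ^ p + B * x = 0}.ncard = p ^ 2 := by
  have hp1 : 1 < p := hp.one_lt
  have hq1 : 1 < p ^ 2 := by nlinarith
  have hqp : p < p ^ 2 := by nlinarith
  have hpk : (p : k) = 0 := CharP.cast_eq_zero k p
  set P : Polynomial k := X ^ (p^2) + C A * X ^ p + C B * X with hPdef
  have heval : ∀ x : k, Polynomial.eval x P = x ^ (p^2) + A * x ^ p + B * x := by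
    intro x; simp [hPdef]
  have hdeg : P.natDegree = p ^ 2 := by
    rw [hPdef]
    compute_degree!
    all_goals first
      | exact hqp.le
      | exact hq1.le
      | rw [sup_eq_left.mpr hqp.le, sup_eq_left.mpr hq1.le]
      | exact ⟨hqp.le, hq1.le⟩
      | simp [hqp.ne', hq1.ne', hp1.ne']
  have hP0 : P ≠ 0 := by intro h; rw [h, natDegree_zero] at hdeg; omega
  have hder : P.derivative = C B := by
    rw [hPdef]; simp [derivative_X_pow, hpk, Nat.cast_pow]
  have hc := additive_count_roots_aux P hP0 B hB hder
  rw [hdeg] at hc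
  rw [show {x : k | x ^ (p^2) + A * x ^ p + B * x = 0} = {x : k | Polynomial.eval x P = 0} by
    ext x; simp [heval]]
  exact hc

open Polynomial in
theorem additive_case2_aux {k : Type*} [Field k] [IsAlgClosed k] {p : ℕ} (hp : p.Prime)
    [CharP k p] (A : k) (hA : A ≠ 0) :
    {x : k | x ^ (p^2) + A * x ^ p = 0}.ncard = p := by
  haveI : Fact p.Prime := ⟨hp⟩
  have hp1 : 1 < p := hp.one_lt
  have hpk : (p : k) = 0 := CharP.cast_eq_zero k p
  obtain ⟨a, ha⟩ : ∃ a : k, a ^ p = A := IsAlgClosed.exists_pow_nat_eq A hp.pos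
  have ha0 : a ≠ 0 := fun h => hA (by rw [← ha, h, zero_pow hp.pos.ne'])
  have hkey : ∀ x : k, x ^ (p^2) + A * x ^ p = (x ^ p + a * x) ^ p := by
    intro x
    rw [add_pow_char, ← pow_mul, ← pow_two, mul_pow, ha]
  have hseteq : {x : k | x ^ (p^2) + A * x ^ p = 0} = {x : k | x ^ p + a * x = 0} := by
    ext x
    simp only [Set.mem_setOf_eq, hkey, pow_eq_zero_iff hp.pos.ne']
  rw [hseteq]
  set Q : Polynomial k := X ^ p + C a * X with hQdef
  have heval : ∀ x : k, Polynomial.eval x Q = x ^ p + a * x := by intro x; simp [hQdef]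
  have hdeg : Q.natDegree = p := by
    rw [hQdef]
    compute_degree!
    all_goals first
      | exact hp1.le
      | rw [sup_eq_left.mpr hp1.le]
      | simp [hp1.ne']
  have hQ0 : Q ≠ 0 := by intro h; rw [h, natDegree_zero] at hdeg; omega
  have hder : Q.derivative = C a := by rw [hQdef]; simp [derivative_X_pow, hpk]
  have hc := additive_count_roots_aux Q hQ0 a ha0 hder
  rw [hdeg] at hc
  rw [show {x : k | x ^ p + a * x = 0} = {x : k | Polynomial.eval x Q = 0} by
    ext x; simp [heval]]
  exact hc

/-- Over an algebraically closed field of characteristic `p`, with `h₄ ≠ 0`, the number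
of solutions of the additive system `c₁^p + c₂h₁ − c₁h₂ = 0`, `c₂^p + c₂h₃ − c₁h₄ = 0`
is `p²` if `h₁h₄ − h₂h₃ ≠ 0`; `p` if `h₁h₄ − h₂h₃ = 0` but `h₃^p − h₂h₄^{p-1} ≠ 0`;
and `1` if both vanish. -/
theorem additive_system_count {k : Type*} [Field k] [IsAlgClosed k] {p : ℕ} (hp : p.Prime)
    [CharP k p] (h₁ h₂ h₃ h₄ : k) (hh₄ : h₄ ≠ 0) :
    (h₁ * h₄ - h₂ * h₃ ≠ 0 →
      {c : k × k | c.1 ^ p + c.2 * h₁ - c.1 * h₂ = 0 ∧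
          c.2 ^ p + c.2 * h₃ - c.1 * h₄ = 0}.ncard = p ^ 2) ∧
    (h₁ * h₄ - h₂ * h₃ = 0 → h₃ ^ p - h₂ * h₄ ^ (p - 1) ≠ 0 →
      {c : k × k | c.1 ^ p + c.2 * h₁ - c.1 * h₂ = 0 ∧
          c.2 ^ p + c.2 * h₃ - c.1 * h₄ = 0}.ncard = p) ∧
    (h₁ * h₄ - h₂ * h₃ = 0 → h₃ ^ p - h₂ * h₄ ^ (p - 1) = 0 →
      {c : k × k | c.1 ^ p + c.2 * h₁ - c.1 * h₂ = 0 ∧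
          c.2 ^ p + c.2 * h₃ - c.1 * h₄ = 0}.ncard = 1) := by
  haveI : Fact p.Prime := ⟨hp⟩
  set A : k := h₃ ^ p - h₂ * h₄ ^ (p - 1) with hAdef
  set B : k := (h₁ * h₄ - h₂ * h₃) * h₄ ^ (p - 1) with hBdef
  set f : k → k × k := fun x => ((x ^ p + x * h₃) / h₄, x) with hfdef
  have hfinj : Function.Injective f := fun a b h => congrArg Prod.snd h
  -- key algebraic identity
  have hps : h₄ ^ p = h₄ ^ (p - 1) * h₄ := by
    rw [← pow_succ, Nat.sub_add_cancel hp.one_le]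
  have h4p : h₄ ^ p ≠ 0 := pow_ne_zero _ hh₄
  have key : ∀ x : k,
      ((x^p + x*h₃)/h₄)^p + x*h₁ - ((x^p + x*h₃)/h₄)*h₂
        = (x^(p^2) + A*x^p + B*x)/h₄^p := by
    intro x
    have e1 : ((x^p + x*h₃)/h₄)^p = (x^(p^2) + h₃^p * x^p)/h₄^p := by
      rw [div_pow, add_pow_char, ← pow_mul, ← pow_two, mul_pow]
      ring_nf
    rw [e1, hAdef, hBdef]
    field_simp
    rw [hps]
    ring
  -- the solution set is the image under f of the root set of the additive polynomial
  have hsets : {c : k × k | c.1 ^ p + c.2 * h₁ - c.1 * h₂ = 0 ∧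
      c.2 ^ p + c.2 * h₃ - c.1 * h₄ = 0}
      = f '' {x : k | x^(p^2) + A*x^p + B*x = 0} := by
    ext ⟨c₁, c₂⟩
    simp only [Set.mem_setOf_eq, Set.mem_image, hfdef, Prod.mk.injEq]
    constructor
    · rintro ⟨he1, he2⟩
      have hc1 : c₁ = (c₂^p + c₂*h₃)/h₄ := by
        field_simp
        linear_combination -he2
      refine ⟨c₂, ?_, hc1.symm, rfl⟩
      have h0 : ((c₂^p + c₂*h₃)/h₄)^p + c₂*h₁ - ((c₂^p + c₂*h₃)/h₄)*h₂ = 0 := by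
        rw [← hc1]; exact he1
      rw [key c₂] at h0
      exact (div_eq_zero_iff.mp h0).resolve_right h4p
    · rintro ⟨x, hx, h1, h2⟩
      subst h1; subst h2
      constructor
      · rw [key x, hx, zero_div]
      · field_simp
        ring
  refine ⟨fun hd => ?_, fun hd hA => ?_, fun hd hA => ?_⟩ <;>
    rw [hsets, Set.ncard_image_of_injective _ hfinj]
  · exact additive_case1_aux hp A B (mul_ne_zero hd (pow_ne_zero _ hh₄))
  · have hB0 : B = 0 := by rw [hBdef, hd, zero_mul]
    rw [show {x : k | x^(p^2) + A*x^p + B*x = 0} = {x : k | x^(p^2) + A*x^p = 0} by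
      ext x; simp [hB0]]
    exact additive_case2_aux hp A hA
  · have hB0 : B = 0 := by rw [hBdef, hd, zero_mul]
    rw [show {x : k | x^(p^2) + A*x^p + B*x = 0} = ({0} : Set k) by
      ext x; simp [hB0, hA, pow_eq_zero_iff (pow_ne_zero 2 hp.pos.ne')]]
    exact Set.ncard_singleton 0
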